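/- arXiv:1410.2934 — 2 statements merged into one kernel-verified Lean document; each statement's English description precedes it below -/
import Mathlib

section
/- Let β <_c α be compositions, ν a partition of |α//β|, and τ ∈ LRRCT^l_ν(α//β). Then rect(stan(τ)) = τ_ν, the canonical standard reverse composition tableau of shape ν. -/
open Finset

/-- A composition is a (finite) list of positive integers. -/
def IsComposition (α : List ℕ) : Prop := ∀ a ∈ α, 0 < a

/-- A partition is a weakly decreasing composition. -/
def IsPartitionL (ν : List ℕ) : Prop := IsComposition ν ∧ ν.Pairwise (· ≥ ·)

/-- `tilde α` is the partition obtained by sorting the parts of `α` decreasingly. -/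
def tilde (α : List ℕ) : List ℕ := α.insertionSort (· ≥ ·)

/-- The cover relation `β ⋖_c α` of the reverse composition poset `𝓛_c`:
either a new part `1` is prepended, or some part `β_j` is replaced by `β_j + 1`
where no earlier part equals `β_j`. -/
def CoverC (β α : List ℕ) : Prop :=
  α = 1 :: β ∨
    ∃ j < β.length, (∀ i < j, β.getD i 0 ≠ β.getD j 0) ∧ α = β.set j (β.getD j 0 + 1)

/-- `β <_c α` : the strict order of the reverse composition poset `𝓛_c`. -/
def LtC (β α : List ℕ) : Prop := Relation.TransGen CoverC β α

/-- The (reverse composition, resp. Young) diagram of `α`: the cell `(i,j)`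
(0-indexed; `i` the row from the top, `j` the column from the left) is present
iff `j < α_i`.  Rows are left-justified. -/
def cdiag (α : List ℕ) : Finset (ℕ × ℕ) :=
  (Finset.range α.length ×ˢ Finset.range α.sum).filter fun c => c.2 < α.getD c.1 0

/-- The inner shape `β` drawn in the bottom-left corner of (the diagram of) `α`. -/
def innerDiag (α β : List ℕ) : Finset (ℕ × ℕ) :=
  (cdiag β).image fun c => (c.1 + (α.length - β.length), c.2)

/-- The skew reverse composition shape `α//β`. -/
def skewDiag (α β : List ℕ) : Finset (ℕ × ℕ) := cdiag α \ innerDiag α β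

/-- A semistandard reverse composition tableau (SSRCT) of shape `α//β`, encoded
as a filling `τ : ℕ × ℕ → ℕ` which is zero off the shape, positive on the shape,
with rows weakly decreasing left to right, the leftmost column strictly
increasing top to bottom, and satisfying the triple condition. -/
structure IsSSRCT (α β : List ℕ) (τ : ℕ × ℕ → ℕ) : Prop where
  zero_off : ∀ c, c ∉ skewDiag α β → τ c = 0
  pos_on : ∀ c ∈ skewDiag α β, 0 < τ c
  row_weak : ∀ i j, (i, j) ∈ skewDiag α β → (i, j + 1) ∈ skewDiag α β →
      τ (i, j + 1) ≤ τ (i, j)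
  col_strict : ∀ i₁ i₂, i₁ < i₂ → (i₁, 0) ∈ skewDiag α β → (i₂, 0) ∈ skewDiag α β →
      τ (i₁, 0) < τ (i₂, 0)
  triple : ∀ i j k, i < j → (j, k + 1) ∈ skewDiag α β →
      ((i, k) ∈ innerDiag α β ∨ ((i, k) ∈ skewDiag α β ∧ τ (j, k + 1) ≤ τ (i, k))) →
      ((i, k + 1) ∈ innerDiag α β ∨
        ((i, k + 1) ∈ skewDiag α β ∧ τ (j, k + 1) < τ (i, k + 1)))

/-- A standard reverse composition tableau: an SSRCT whose filling is a bijection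
onto `{1, …, |α//β|}`. -/
def IsSRCT (α β : List ℕ) (τ : ℕ × ℕ → ℕ) : Prop :=
  IsSSRCT α β τ ∧ Set.BijOn τ ↑(skewDiag α β) (Set.Icc 1 (skewDiag α β).card)

/-- The content of the filling `τ` of the cells `s` is the composition `ν`,
i.e. the entry `i+1` occurs exactly `ν_{i+1}` times (0-indexed: `ν.getD i 0`). -/
def HasContent (s : Finset (ℕ × ℕ)) (τ : ℕ × ℕ → ℕ) (ν : List ℕ) : Prop :=
  ∀ i, (s.filter fun c => τ c = i + 1).card = ν.getD i 0

/-- `e` is the exponent of the monomial `x^τ` associated to the filling `τ` of `s`,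
where the entry `m` corresponds to the variable indexed `m - 1`. -/
def HasExponent (s : Finset (ℕ × ℕ)) (τ : ℕ × ℕ → ℕ) (e : ℕ →₀ ℕ) : Prop :=
  ∀ v, (s.filter fun c => τ c = v + 1).card = e v

/-- The skew quasisymmetric Schur function `𝒮_{α//β} = Σ_{τ ∈ SSRCT(α//β)} x^τ`,
defined coefficientwise: the coefficient of `x^e` is the number of SSRCT of shape
`α//β` with exponent `e`. -/
noncomputable def skewQS (α β : List ℕ) : MvPowerSeries ℕ ℚ :=
  fun e => (({τ | IsSSRCT α β τ ∧ HasExponent (skewDiag α β) τ e} :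
    Set (ℕ × ℕ → ℕ)).ncard : ℚ)

/-- The quasisymmetric Schur function `𝒮_α := 𝒮_{α//∅}`. -/
noncomputable def QS (α : List ℕ) : MvPowerSeries ℕ ℚ := skewQS α []

/-- The skew Young diagram `λ/μ` (inner shape in the top-left corner). -/
def skewYoungDiag (lam mu : List ℕ) : Finset (ℕ × ℕ) := cdiag lam \ cdiag mu

/-- A semistandard reverse tableau (SSRT) of skew Young shape `λ/μ`: rows weakly
decrease left to right, columns strictly decrease top to bottom. -/
structure IsSSRT (lam mu : List ℕ) (T : ℕ × ℕ → ℕ) : Prop where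
  zero_off : ∀ c, c ∉ skewYoungDiag lam mu → T c = 0
  pos_on : ∀ c ∈ skewYoungDiag lam mu, 0 < T c
  row_weak : ∀ i j, (i, j) ∈ skewYoungDiag lam mu → (i, j + 1) ∈ skewYoungDiag lam mu →
      T (i, j + 1) ≤ T (i, j)
  col_strict : ∀ i j, (i, j) ∈ skewYoungDiag lam mu → (i + 1, j) ∈ skewYoungDiag lam mu →
      T (i + 1, j) < T (i, j)

/-- The skew Schur function `s_{λ/μ} = Σ_{T ∈ SSRT(λ/μ)} x^T`, defined
coefficientwise. -/
noncomputable def skewSchur (lam mu : List ℕ) : MvPowerSeries ℕ ℚ :=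
  fun e => (({T | IsSSRT lam mu T ∧ HasExponent (skewYoungDiag lam mu) T e} :
    Set (ℕ × ℕ → ℕ)).ncard : ℚ)

/-- The Schur function `s_λ := s_{λ/∅}`. -/
noncomputable def schurPS (lam : List ℕ) : MvPowerSeries ℕ ℚ := skewSchur lam []

/-- A power series is a symmetric function iff it is invariant under every
permutation of the variables. -/
def IsSymmFn (f : MvPowerSeries ℕ ℚ) : Prop :=
  ∀ σ : Equiv.Perm ℕ, ∀ e : ℕ →₀ ℕ,
    MvPowerSeries.coeff (e.equivMapDomain σ) f = MvPowerSeries.coeff e f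

/-- The left lattice condition: for every `i ≥ 1` and every `k`, the `k`-th `i`
from the left is weakly left of the `k`-th `i+1` from the left.  (Equivalently,
in every set of columns `≤ x` there are at least as many entries `i` as entries
`i+1`; recall that in an SSRCT equal entries lie in distinct columns.) -/
def LeftLatticeCond (s : Finset (ℕ × ℕ)) (τ : ℕ × ℕ → ℕ) : Prop :=
  ∀ i, 1 ≤ i → ∀ x,
    (s.filter fun c => τ c = i + 1 ∧ c.2 ≤ x).card ≤
      (s.filter fun c => τ c = i ∧ c.2 ≤ x).card

/-- The right lattice condition: for every `i ≥ 1` and every `k`, the `k`-th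
`i+1` from the right is weakly right of the `k`-th `i` from the right. -/
def RightLatticeCond (s : Finset (ℕ × ℕ)) (τ : ℕ × ℕ → ℕ) : Prop :=
  ∀ i, 1 ≤ i → ∀ x,
    (s.filter fun c => τ c = i ∧ x ≤ c.2).card ≤
      (s.filter fun c => τ c = i + 1 ∧ x ≤ c.2).card

/-- Left Littlewood–Richardson reverse composition tableaux of shape `α//β`. -/
def LRRCTl (α β : List ℕ) : Set (ℕ × ℕ → ℕ) :=
  {τ | IsSSRCT α β τ ∧ LeftLatticeCond (skewDiag α β) τ}

/-- `LRRCT^l_ν(α//β)`: those with content `ν`. -/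
def LRRCTlnu (α β ν : List ℕ) : Set (ℕ × ℕ → ℕ) :=
  {τ ∈ LRRCTl α β | HasContent (skewDiag α β) τ ν}

/-- Right Littlewood–Richardson reverse composition tableaux of shape `α//β`. -/
def LRRCTr (α β : List ℕ) : Set (ℕ × ℕ → ℕ) :=
  {τ | IsSSRCT α β τ ∧ RightLatticeCond (skewDiag α β) τ}

/-- `LRRCT^r_δ(α//β)`: those with content `δ`. -/
def LRRCTrnu (α β δ : List ℕ) : Set (ℕ × ℕ → ℕ) :=
  {τ ∈ LRRCTr α β | HasContent (skewDiag α β) τ δ}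

/-- Left Littlewood–Richardson reverse tableaux of shape `λ/μ`. -/
def LRRTl (lam mu : List ℕ) : Set (ℕ × ℕ → ℕ) :=
  {T | IsSSRT lam mu T ∧ LeftLatticeCond (skewYoungDiag lam mu) T}

/-- Right Littlewood–Richardson reverse tableaux of shape `λ/μ`. -/
def LRRTr (lam mu : List ℕ) : Set (ℕ × ℕ → ℕ) :=
  {T | IsSSRT lam mu T ∧ RightLatticeCond (skewYoungDiag lam mu) T}

/-- Standardization of the filling `τ` of `s`: for each value in turn, its
occurrences are relabelled from right to left by the next consecutive integers.
(The cell `c` receives the number of entries smaller than `τ c` plus the number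
of entries equal to `τ c` lying weakly to the right of `c`.) -/
def stanF (s : Finset (ℕ × ℕ)) (τ : ℕ × ℕ → ℕ) : ℕ × ℕ → ℕ := fun c =>
  if c ∈ s then
    (s.filter fun d => τ d < τ c).card + (s.filter fun d => τ d = τ c ∧ c.2 ≤ d.2).card
  else 0

/-- Place a new one-cell row containing `k` so that the leftmost column remains
strictly increasing top to bottom. -/
def insertNewRow (k : ℕ) : List (List ℕ) → List (List ℕ)
  | [] => [[k]]
  | row :: rest => if k < row.headD 0 then [k] :: row :: rest else row :: insertNewRow k rest

/-- One step of Mason's insertion: scan the positions of the (1-indexed) column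
`j ≥ 2`, top to bottom, with current value `k`.  Either `k` is placed at the end
of a row of length `j - 1` whose last entry is weakly larger (and we stop),
or `k` bumps a smaller entry `k₂` in column `j` whose left neighbour is weakly
larger than `k` (and we continue down the column with `k₂`); otherwise the value
is carried to the next column to the left (`some k` is returned). -/
def scanCol (j : ℕ) : ℕ → List (List ℕ) → List (List ℕ) × Option ℕ
  | k, [] => ([], some k)
  | k, row :: rest =>
    if row.length + 1 = j ∧ 2 ≤ j ∧ k ≤ row.getD (j - 2) 0 then
      ((row ++ [k]) :: rest, none)
    else if j ≤ row.length ∧ row.getD (j - 1) 0 < k ∧ k ≤ row.getD (j - 2) 0 then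
      let p := scanCol j (row.getD (j - 1) 0) rest
      (row.set (j - 1) k :: p.1, p.2)
    else
      let p := scanCol j k rest
      (row :: p.1, p.2)

/-- Scan columns `j, j-1, …, 2` in turn; a value reaching the leftmost column is
placed as a new one-cell row. -/
def scanCols : ℕ → ℕ → List (List ℕ) → List (List ℕ)
  | 0, k, T => insertNewRow k T
  | 1, k, T => insertNewRow k T
  | j + 2, k, T =>
    match scanCol (j + 2) k T with
    | (T', none) => T'
    | (T', some k') => scanCols (j + 1) k' T'

/-- Mason's insertion `k → T` of a value into an SSRCT of straight shape, the
tableau represented as its list of rows (top to bottom): scanning starts at the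
top of column `r + 1` where `r` is the length of the longest row. -/
def masonInsert (k : ℕ) (T : List (List ℕ)) : List (List ℕ) :=
  scanCols ((T.map List.length).foldr max 0 + 1) k T

/-- The entries of column `j` of the filling `τ` of `s`, in increasing order. -/
def colEntries (s : Finset (ℕ × ℕ)) (τ : ℕ × ℕ → ℕ) (j : ℕ) : List ℕ :=
  ((s.filter fun c => c.2 = j).image τ).sort (· ≤ ·)

/-- The insertion word of the first `j` columns: columns taken from left to
right, each column's entries in increasing order. -/
def rectWord (s : Finset (ℕ × ℕ)) (τ : ℕ × ℕ → ℕ) (j : ℕ) : List ℕ :=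
  (List.range j).flatMap (colEntries s τ)

/-- The intermediate tableau `τ^j` in the rectification: the entries of the
first `j` columns inserted into an initially empty tableau. -/
def rectPartial (s : Finset (ℕ × ℕ)) (τ : ℕ × ℕ → ℕ) (j : ℕ) : List (List ℕ) :=
  (rectWord s τ j).foldl (fun T k => masonInsert k T) []

/-- The rectification `rect(τ)` of a filling of `s`, as a list of rows. -/
def rectRows (s : Finset (ℕ × ℕ)) (τ : ℕ × ℕ → ℕ) : List (List ℕ) :=
  rectPartial s τ (s.sup fun c => c.2 + 1)

/-- Rows of the canonical SRCT `τ_ν`: row `i` (0-indexed) contains the integers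
from `ν₁ + ⋯ + ν_{i+1}` down to `1 + ν₁ + ⋯ + ν_i`, left to right. -/
def canonRowsAux : List ℕ → ℕ → List (List ℕ)
  | [], _ => []
  | a :: rest, sm => ((List.range a).map fun t => sm + a - t) :: canonRowsAux rest (sm + a)

/-- The canonical SRCT `τ_ν` of shape `ν`, as a list of rows. -/
def canonRows (ν : List ℕ) : List (List ℕ) := canonRowsAux ν 0

/-- The number of cells of the inner Young shape `β̃` in column `j`. -/
def innerColCount (β : List ℕ) (j : ℕ) : ℕ :=
  ((cdiag (tilde β)).filter fun c => c.2 = j).card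

/-- The bijection `ρ_β` sending an SSRCT of shape `γ//β` to an SSRT of shape
`γ̃/β̃`: the entries of each column are written in decreasing order and
top-justified below the inner shape `β̃`. -/
def rhoMap (β γ : List ℕ) (τ : ℕ × ℕ → ℕ) : ℕ × ℕ → ℕ := fun c =>
  if c.1 < innerColCount β c.2 then 0
  else (((((skewDiag γ β).filter fun d => d.2 = c.2).image τ).sort (· ≤ ·)).reverse).getD
        (c.1 - innerColCount β c.2) 0

/-- The composition recording the number of cells in each nonempty row of
`α//β`, read from top to bottom. -/
def rowComp (α β : List ℕ) : List ℕ :=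
  ((List.range α.length).map fun i => ((skewDiag α β).filter fun c => c.1 = i).card).filter
    fun x => x ≠ 0



section RectStanProof
namespace RectProof

def mkRow (top l : ℕ) : List ℕ := (List.range l).map fun t => top - t

def pcB : List (ℕ × ℕ) → ℕ → List (List ℕ)
  | [], _ => []
  | (a, l) :: rest, sm =>
      if l = 0 then pcB rest (sm + a) else mkRow (sm + a) l :: pcB rest (sm + a)

@[simp] lemma mkRow_length (top l : ℕ) : (mkRow top l).length = l := by simp [mkRow]

lemma mkRow_getD_le (top l t : ℕ) : (mkRow top l).getD t 0 ≤ top := by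
  rcases lt_or_ge t l with h | h
  · rw [List.getD_eq_getElem _ _ (by simpa using h)]
    simp only [mkRow, List.getElem_map, List.getElem_range]
    exact Nat.sub_le _ _
  · rw [List.getD_eq_default _ _ (by simpa using h)]; omega

lemma mkRow_getD (top l t : ℕ) (h : t < l) : (mkRow top l).getD t 0 = top - t := by
  rw [List.getD_eq_getElem _ _ (by simpa using h)]
  simp [mkRow]

/-- A row through which the scan at column `j` carrying `k` passes. -/
def passCond (j k : ℕ) (row : List ℕ) : Prop :=
  ¬(row.length + 1 = j ∧ 2 ≤ j ∧ k ≤ row.getD (j - 2) 0) ∧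
  ¬(j ≤ row.length ∧ row.getD (j - 1) 0 < k ∧ k ≤ row.getD (j - 2) 0)

lemma passCond_of_entries_lt {j k : ℕ} {row : List ℕ}
    (h : ∀ t, row.getD t 0 < k) : passCond j k row :=
  ⟨fun ⟨_, _, hk⟩ => absurd hk (not_le.2 (h _)), fun ⟨_, _, hk⟩ => absurd hk (not_le.2 (h _))⟩

lemma passCond_of_short {j k : ℕ} {row : List ℕ}
    (h : row.length + 1 < j) : passCond j k row :=
  ⟨fun ⟨h1, _, _⟩ => by omega, fun ⟨h1, _, _⟩ => by omega⟩

lemma scanCol_pass {j k : ℕ} : ∀ {T : List (List ℕ)},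
    (∀ row ∈ T, passCond j k row) → scanCol j k T = (T, some k)
  | [], _ => rfl
  | row :: rest, h => by
    have hp := h row (by simp)
    rw [scanCol, if_neg hp.1, if_neg hp.2]
    have := scanCol_pass (T := rest) (fun r hr => h r (by simp [hr]))
    simp [this]

lemma insertNewRow_all_lt {k : ℕ} : ∀ {T : List (List ℕ)},
    (∀ row ∈ T, row.headD 0 < k) → insertNewRow k T = T ++ [[k]]
  | [], _ => rfl
  | row :: rest, h => by
    rw [insertNewRow, if_neg (by exact not_lt.2 (le_of_lt (h row (by simp)))),
      insertNewRow_all_lt (fun r hr => h r (by simp [hr]))]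
    simp

lemma scanCols_descend {k : ℕ} {T : List (List ℕ)} : ∀ {j j1 : ℕ}, 1 ≤ j1 → j1 ≤ j →
    (∀ j', j1 < j' → j' ≤ j → ∀ row ∈ T, passCond j' k row) →
    scanCols j k T = scanCols j1 k T := by
  intro j
  induction j with
  | zero => intro j1 h1 h2 _; omega
  | succ j ih =>
    intro j1 h1 h2 hp
    rcases eq_or_lt_of_le h2 with rfl | hlt
    · rfl
    · obtain ⟨j'', rfl⟩ : ∃ j'', j = j'' + 1 := ⟨j - 1, by omega⟩
      rw [show j'' + 1 + 1 = j'' + 2 from rfl, scanCols,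
        scanCol_pass (hp _ (by omega) (by omega))]
      exact ih h1 (by omega) (fun j' hj1 hj2 => hp j' hj1 (by omega))

lemma length_le_foldr_max {row : List ℕ} : ∀ {T : List (List ℕ)}, row ∈ T →
    row.length ≤ (T.map List.length).foldr max 0
  | [], h => by simp at h
  | r :: rest, h => by
    rcases List.mem_cons.1 h with rfl | h
    · simp [le_max_left]
    · exact le_trans (length_le_foldr_max h) (by simp [le_max_right])

end RectProof

namespace RectProof

/-- shorthand -/
def lP (L : List (ℕ × ℕ)) (p : ℕ) : ℕ := (L.getD p (0,0)).2
def aP (L : List (ℕ × ℕ)) (p : ℕ) : ℕ := (L.getD p (0,0)).1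
def SA (L : List (ℕ × ℕ)) (p : ℕ) : ℕ := ((L.take p).map Prod.fst).sum

@[simp] lemma lP_cons_succ (x : ℕ × ℕ) (L : List (ℕ × ℕ)) (p : ℕ) :
    lP (x :: L) (p + 1) = lP L p := by simp [lP]

@[simp] lemma aP_cons_succ (x : ℕ × ℕ) (L : List (ℕ × ℕ)) (p : ℕ) :
    aP (x :: L) (p + 1) = aP L p := by simp [aP]

@[simp] lemma lP_cons_zero (a l : ℕ) (L : List (ℕ × ℕ)) : lP ((a, l) :: L) 0 = l := rfl
@[simp] lemma aP_cons_zero (a l : ℕ) (L : List (ℕ × ℕ)) : aP ((a, l) :: L) 0 = a := rfl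

@[simp] lemma SA_zero (L : List (ℕ × ℕ)) : SA L 0 = 0 := by simp [SA]

@[simp] lemma SA_cons_succ (x : ℕ × ℕ) (L : List (ℕ × ℕ)) (p : ℕ) :
    SA (x :: L) (p + 1) = x.1 + SA L p := by simp [SA]

lemma SA_succ (L : List (ℕ × ℕ)) (p : ℕ) (hp : p < L.length) :
    SA L (p + 1) = SA L p + aP L p := by
  induction L generalizing p with
  | nil => simp at hp
  | cons x rest ih =>
    cases p with
    | zero =>
        cases x with
        | mk a l => simp [SA, aP, List.take_succ]
    | succ p => simp only [SA_cons_succ, aP_cons_succ]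
                rw [ih p (by simpa using hp)]; omega

lemma SA_mono (L : List (ℕ × ℕ)) {p q : ℕ} (h : p ≤ q) : SA L p ≤ SA L q := by
  induction q with
  | zero => rw [Nat.le_zero.mp h]
  | succ q ih =>
    rcases eq_or_lt_of_le h with rfl | hlt
    · omega
    · rcases le_or_gt L.length q with hq | hq
      · have : L.take (q + 1) = L.take q := by
          rw [List.take_of_length_le hq, List.take_of_length_le (by omega)]
        calc SA L p ≤ SA L q := ih (by omega)
          _ = SA L (q+1) := by simp [SA, this]
      · rw [SA_succ L q hq]
        exact le_trans (ih (by omega)) (by omega)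

lemma mem_pcB : ∀ {L : List (ℕ × ℕ)} {sm : ℕ} {row : List ℕ}, row ∈ pcB L sm →
    ∃ p < L.length, lP L p ≠ 0 ∧ row = mkRow (sm + SA L (p + 1)) (lP L p)
  | [], _, _, h => by simp [pcB] at h
  | (a, l) :: rest, sm, row, h => by
    rw [pcB] at h
    by_cases hl : l = 0
    · rw [if_pos hl] at h
      obtain ⟨p, hp, hne, hr⟩ := mem_pcB h
      exact ⟨p + 1, by simpa using hp, by simpa using hne,
        by simpa [add_assoc] using hr⟩
    · rw [if_neg hl] at h
      rcases List.mem_cons.1 h with rfl | h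
      · exact ⟨0, by simp, by simpa using hl, by simp [SA, List.take_succ]⟩
      · obtain ⟨p, hp, hne, hr⟩ := mem_pcB h
        exact ⟨p + 1, by simpa using hp, by simpa using hne,
          by simpa [add_assoc] using hr⟩

lemma mkRow_mem_pcB : ∀ (L : List (ℕ × ℕ)) (sm p : ℕ), p < L.length → lP L p ≠ 0 →
    mkRow (sm + SA L (p + 1)) (lP L p) ∈ pcB L sm
  | [], _, _, h, _ => by simp at h
  | (a, l) :: rest, sm, 0, _, hne => by
    rw [pcB, if_neg (by simpa using hne)]
    simp [SA, List.take_succ]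
  | (a, l) :: rest, sm, p + 1, hp, hne => by
    have := mkRow_mem_pcB rest (sm + a) p (by simpa using hp) (by simpa using hne)
    rw [pcB]
    by_cases hl : l = 0
    · rw [if_pos hl]; simpa [add_assoc] using this
    · rw [if_neg hl]; exact List.mem_cons_of_mem _ (by simpa [add_assoc] using this)

end RectProof

namespace RectProof

lemma scanCol_append : ∀ (L : List (ℕ × ℕ)) (sm i : ℕ), i < L.length →
    (∀ p < i, lP L i < lP L p) → 1 ≤ lP L i → lP L i < aP L i →
    scanCol (lP L i + 1) (sm + SA L i + (aP L i - lP L i)) (pcB L sm) =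
      (pcB (L.set i (aP L i, lP L i + 1)) sm, none)
  | [], _, i, hi, _, _, _ => by simp at hi
  | (a, l) :: rest, sm, 0, hi, h1, hl, hal => by
    simp only [lP_cons_zero, aP_cons_zero, SA_zero] at hl hal ⊢
    rw [pcB, if_neg (by omega)]
    rw [scanCol, if_pos ?_]
    · have hset : ((a, l) :: rest).set 0 (a, l + 1) = (a, l + 1) :: rest := rfl
      rw [hset, pcB, if_neg (by omega)]
      have : mkRow (sm + a) l ++ [sm + 0 + (a - l)] = mkRow (sm + a) (l + 1) := by
        rw [mkRow, mkRow, List.range_succ, List.map_append]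
        congr 1
        simp; omega
      rw [this]
    · refine ⟨by simp, by omega, ?_⟩
      rw [show l + 1 - 2 = l - 1 by omega, mkRow_getD _ _ _ (by omega)]
      omega
  | (a, l) :: rest, sm, i + 1, hi, h1, hl, hal => by
    have hl0 : l ≠ 0 := by have := h1 0 (by omega); simp at this; omega
    simp only [lP_cons_succ, aP_cons_succ] at hl hal ⊢
    rw [pcB, if_neg hl0]
    have hk : sm + SA ((a, l) :: rest) (i + 1) + (aP rest i - lP rest i) =
        (sm + a) + SA rest i + (aP rest i - lP rest i) := by
      rw [SA_cons_succ]; omega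
    rw [scanCol, if_neg ?hfirst, if_neg ?hsecond]
    case hfirst =>
      rintro ⟨hlen, -, -⟩
      have := h1 0 (by omega)
      simp [mkRow_length] at hlen this; omega
    case hsecond =>
      rintro ⟨-, -, hk2⟩
      have hle : (mkRow (sm + a) l).getD (lP rest i + 1 - 2) 0 ≤ sm + a :=
        mkRow_getD_le _ _ _
      have : (sm + a) ≤ sm + SA ((a,l) :: rest) (i+1) := by
        rw [SA_cons_succ]; omega
      omega
    · rw [hk, scanCol_append rest (sm + a) i (by simpa using hi)
        (fun p hp => by simpa using h1 (p+1) (by omega)) hl hal]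
      have hset : ((a, l) :: rest).set (i + 1) (aP rest i, lP rest i + 1) =
          (a, l) :: rest.set i (aP rest i, lP rest i + 1) := rfl
      rw [hset, pcB, if_neg hl0]

lemma pcB_nil_of_zero : ∀ (L : List (ℕ × ℕ)) (sm : ℕ),
    (∀ p < L.length, lP L p = 0) → pcB L sm = []
  | [], _, _ => rfl
  | (a, l) :: rest, sm, h => by
    have h0 := h 0 (by simp)
    simp only [lP_cons_zero] at h0
    rw [pcB, if_pos h0]
    exact pcB_nil_of_zero rest _ (fun p hp => by simpa using h (p+1) (by simpa using hp))

lemma pcB_set_of_zero : ∀ (L : List (ℕ × ℕ)) (sm i : ℕ), i < L.length → lP L i = 0 →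
    (∀ q, i < q → q < L.length → lP L q = 0) →
    pcB (L.set i (aP L i, 1)) sm = pcB L sm ++ [[sm + SA L (i + 1)]]
  | [], _, i, hi, _, _ => by simp at hi
  | (a, l) :: rest, sm, 0, _, hl, hq => by
    simp only [lP_cons_zero] at hl
    subst hl
    simp only [aP_cons_zero, SA_cons_succ, SA_zero]
    have hset : ((a, 0) :: rest).set 0 (a, 1) = (a, 1) :: rest := rfl
    rw [hset, pcB, if_neg (by omega), pcB, if_pos rfl]
    rw [pcB_nil_of_zero rest (sm + a)
      (fun p hp => by simpa using hq (p+1) (by omega) (by simpa using hp))]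
    simp [mkRow, List.range_succ]
  | (a, l) :: rest, sm, i + 1, hi, hl, hq => by
    simp only [lP_cons_succ] at hl
    have hset : ((a, l) :: rest).set (i + 1) (aP rest i, 1) =
        (a, l) :: rest.set i (aP rest i, 1) := rfl
    have ih := pcB_set_of_zero rest (sm + a) i (by simpa using hi) hl
      (fun q hq' hq'' => by simpa using hq (q+1) (by omega) (by simpa using hq''))
    simp only [aP_cons_succ, hset, SA_cons_succ]
    by_cases h0 : l = 0
    · rw [pcB, if_pos h0, pcB, if_pos h0, ih, add_assoc]
    · rw [pcB, if_neg h0, pcB, if_neg h0, ih, add_assoc]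
      simp

end RectProof

namespace RectProof

lemma headD_eq_getD_zero (l : List ℕ) : l.headD 0 = l.getD 0 0 := by
  cases l <;> rfl

lemma mason_step (L : List (ℕ × ℕ)) (sm i : ℕ) (hi : i < L.length)
    (h1 : ∀ p < i, lP L i < lP L p)
    (h2 : ∀ q, i < q → q < L.length → lP L q ≤ lP L i)
    (h4 : lP L i < aP L i) :
    masonInsert (sm + SA L i + (aP L i - lP L i)) (pcB L sm) =
      pcB (L.set i (aP L i, lP L i + 1)) sm := by
  set k := sm + SA L i + (aP L i - lP L i) with hk
  set T := pcB L sm with hT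
  have hpass : ∀ j', lP L i + 1 < j' → ∀ row ∈ T, passCond j' k row := by
    intro j' hj' row hrow
    obtain ⟨p, hp, hne, rfl⟩ := mem_pcB hrow
    by_cases hpi : p < i
    · apply passCond_of_entries_lt
      intro t
      have hb := mkRow_getD_le (sm + SA L (p + 1)) (lP L p) t
      have hmono : SA L (p + 1) ≤ SA L i := SA_mono L (by omega)
      omega
    · apply passCond_of_short
      have : lP L p ≤ lP L i := by
        rcases eq_or_lt_of_le (not_lt.1 hpi) with rfl | hlt
        · exact le_rfl
        · exact h2 p hlt hp
      rw [mkRow_length]; omega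
  have hM : lP L i ≤ (T.map List.length).foldr max 0 := by
    by_cases h0 : lP L i = 0
    · omega
    · have := length_le_foldr_max (mkRow_mem_pcB L sm i hi h0)
      rwa [mkRow_length] at this
  rw [masonInsert,
    scanCols_descend (by omega) (by omega) (fun j' hj1 hj2 => hpass j' hj1)]
  by_cases h0 : lP L i = 0
  · rw [h0, show (0:ℕ) + 1 = 1 from rfl, scanCols]
    rw [insertNewRow_all_lt ?_]
    · have hset0 := pcB_set_of_zero L sm i hi h0 (fun q hq hq' => by
        have := h2 q hq hq'; omega)
      have hkk : k = sm + SA L (i + 1) := by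
        rw [hk, SA_succ L i hi, h0]; omega
      rw [hset0, hkk]
    · intro row hrow
      obtain ⟨p, hp, hne, rfl⟩ := mem_pcB hrow
      have hpi : p < i := by
        rcases lt_trichotomy p i with h | rfl | h
        · exact h
        · omega
        · have := h2 p h hp; omega
      rw [headD_eq_getD_zero]
      have hb := mkRow_getD_le (sm + SA L (p + 1)) (lP L p) 0
      have hmono : SA L (p + 1) ≤ SA L i := SA_mono L (by omega)
      omega
  · have happ := scanCol_append L sm i hi h1 (by omega) h4
    obtain ⟨j'', hj''⟩ : ∃ j'', lP L i + 1 = j'' + 2 := ⟨lP L i - 1, by omega⟩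
    rw [hj''] at happ ⊢
    rw [scanCols, happ]
end RectProof

namespace RectProof

def mkL (f : ℕ → ℕ) : List ℕ → ℕ → List (ℕ × ℕ)
  | [], _ => []
  | a :: rest, i => (a, f i) :: mkL f rest (i + 1)

@[simp] lemma mkL_length (f : ℕ → ℕ) : ∀ (ν : List ℕ) (i0 : ℕ), (mkL f ν i0).length = ν.length
  | [], _ => rfl
  | _ :: rest, i0 => by rw [mkL]; simp [mkL_length f rest (i0+1)]

lemma lP_mkL (f : ℕ → ℕ) : ∀ (ν : List ℕ) (i0 p : ℕ), p < ν.length →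
    lP (mkL f ν i0) p = f (i0 + p)
  | [], _, p, h => by simp at h
  | a :: rest, i0, 0, _ => by simp [mkL, lP]
  | a :: rest, i0, p + 1, h => by
    rw [mkL, lP_cons_succ, lP_mkL f rest (i0+1) p (by simpa using h)]
    ring_nf

lemma aP_mkL (f : ℕ → ℕ) : ∀ (ν : List ℕ) (i0 p : ℕ), p < ν.length →
    aP (mkL f ν i0) p = ν.getD p 0
  | [], _, p, h => by simp at h
  | a :: rest, i0, 0, _ => by simp [mkL, aP]
  | a :: rest, i0, p + 1, h => by
    rw [mkL, aP_cons_succ, aP_mkL f rest (i0+1) p (by simpa using h)]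
    rfl

lemma SA_mkL (f : ℕ → ℕ) : ∀ (ν : List ℕ) (i0 t : ℕ), SA (mkL f ν i0) t = (ν.take t).sum
  | [], i0, t => by simp [mkL, SA]
  | a :: rest, i0, 0 => by simp
  | a :: rest, i0, t + 1 => by
    rw [mkL, SA_cons_succ, SA_mkL f rest (i0+1) t]
    simp

lemma mkL_congr {f g : ℕ → ℕ} : ∀ {ν : List ℕ} {i0 : ℕ},
    (∀ p < ν.length, f (i0 + p) = g (i0 + p)) → mkL f ν i0 = mkL g ν i0
  | [], _, _ => rfl
  | a :: rest, i0, h => by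
    rw [mkL, mkL, show f i0 = g i0 by simpa using h 0 (by simp),
      mkL_congr (fun p hp => by
        have := h (p + 1) (by simpa using hp)
        convert this using 2 <;> omega)]

lemma mkL_set {f : ℕ → ℕ} : ∀ {ν : List ℕ} {i0 t : ℕ} {x : ℕ}, t < ν.length →
    (mkL f ν i0).set t (ν.getD t 0, x) =
      mkL (fun m => if m = i0 + t then x else f m) ν i0
  | [], _, t, _, h => by simp at h
  | a :: rest, i0, 0, x, _ => by
    rw [mkL, mkL]
    simp only [List.getD_cons_zero, List.set_cons_zero, if_pos (by omega : i0 = i0 + 0)]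
    congr 1
    exact mkL_congr (fun p hp => by rw [if_neg (by omega)])
  | a :: rest, i0, t + 1, x, h => by
    rw [mkL, mkL]
    simp only [List.getD_cons_succ, List.set_cons_succ, if_neg (by omega : ¬ i0 = i0 + (t+1))]
    congr 1
    rw [mkL_set (by simpa using h)]
    exact mkL_congr (fun p hp => by
      rcases eq_or_ne (i0 + 1 + p) (i0 + (t + 1)) with hc | hc
      · rw [if_pos hc, if_pos (by omega)]
      · rw [if_neg hc, if_neg (by omega)])

lemma pcB_mkL_full {f : ℕ → ℕ} : ∀ {ν : List ℕ} {i0 sm : ℕ},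
    (∀ p < ν.length, f (i0 + p) = ν.getD p 0) → (∀ a ∈ ν, 0 < a) →
    pcB (mkL f ν i0) sm = canonRowsAux ν sm
  | [], _, _, _, _ => rfl
  | a :: rest, i0, sm, hf, hpos => by
    have h0 : f i0 = a := by simpa using hf 0 (by simp)
    rw [mkL, pcB, if_neg (by have := hpos a (by simp); omega), canonRowsAux]
    rw [h0]
    congr 1
    exact pcB_mkL_full (fun p hp => by
        have := hf (p + 1) (by simpa using hp)
        rw [show i0 + 1 + p = i0 + (p + 1) by omega, this]; rfl)
      (fun b hb => hpos b (by simp [hb]))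

lemma pcB_mkL_zero {f : ℕ → ℕ} {ν : List ℕ} {i0 sm : ℕ}
    (hf : ∀ p < ν.length, f (i0 + p) = 0) : pcB (mkL f ν i0) sm = [] :=
  pcB_nil_of_zero _ _ (fun p hp => by
    rw [lP_mkL f ν i0 p (by simpa using hp)]
    exact hf p (by simpa using hp))

end RectProof

namespace RectProof

def cnt (s : Finset (ℕ × ℕ)) (τ : ℕ × ℕ → ℕ) (i j : ℕ) : ℕ :=
  (s.filter fun c => τ c = i ∧ c.2 < j).card

def colset (s : Finset (ℕ × ℕ)) (τ : ℕ × ℕ → ℕ) (i j : ℕ) : Finset (ℕ × ℕ) :=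
  s.filter fun c => τ c = i ∧ c.2 = j

def label (s : Finset (ℕ × ℕ)) (τ : ℕ × ℕ → ℕ) (ν : List ℕ) (i j : ℕ) : ℕ :=
  (ν.take i).sum - cnt s τ i j

def colList (s : Finset (ℕ × ℕ)) (τ : ℕ × ℕ → ℕ) (ν : List ℕ) (j : ℕ) : List ℕ :=
  (List.range ν.length).filterMap fun p =>
    if (colset s τ (p + 1) j).Nonempty then some (label s τ ν (p + 1) j) else none

variable {s : Finset (ℕ × ℕ)} {τ : ℕ × ℕ → ℕ} {ν : List ℕ}

lemma take_sum_succ (ν : List ℕ) (n : ℕ) :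
    (ν.take (n + 1)).sum = (ν.take n).sum + ν.getD n 0 := by
  rcases lt_or_ge n ν.length with h | h
  · rw [List.sum_take_succ _ _ h, List.getD_eq_getElem _ _ h]
  · rw [List.take_of_length_le h, List.take_of_length_le (by omega),
      List.getD_eq_default _ _ h]
    omega

lemma take_sum_mono (ν : List ℕ) {m m' : ℕ} (h : m ≤ m') :
    (ν.take m).sum ≤ (ν.take m').sum := by
  induction m' with
  | zero => rw [Nat.le_zero.mp h]
  | succ m' ih =>
    rcases eq_or_lt_of_le h with rfl | hlt
    · exact le_rfl
    · exact le_trans (ih (by omega)) (by rw [take_sum_succ]; omega)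

lemma cnt_zero (i : ℕ) : cnt s τ i 0 = 0 := by simp [cnt]

lemma cnt_le (hcont : HasContent s τ ν) (p j : ℕ) : cnt s τ (p + 1) j ≤ ν.getD p 0 := by
  rw [← hcont p]
  exact Finset.card_le_card (fun c hc => by
    simp only [Finset.mem_filter] at hc ⊢; tauto)

lemma cnt_lt (hcont : HasContent s τ ν) {p j : ℕ} (h : (colset s τ (p + 1) j).Nonempty) :
    cnt s τ (p + 1) j < ν.getD p 0 := by
  obtain ⟨c, hc⟩ := h
  simp only [colset, Finset.mem_filter] at hc
  rw [← hcont p]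
  apply Finset.card_lt_card
  refine ⟨fun d hd => by simp only [Finset.mem_filter] at hd ⊢; tauto, fun hsub => ?_⟩
  have := hsub (by simp only [Finset.mem_filter]; tauto :
    c ∈ s.filter fun c => τ c = p + 1)
  simp only [Finset.mem_filter] at this
  omega

lemma cnt_succ_of_occ (hdist : ∀ c ∈ s, ∀ d ∈ s, τ c = τ d → c.2 = d.2 → c = d)
    {i j : ℕ} (h : (colset s τ i j).Nonempty) : cnt s τ i (j + 1) = cnt s τ i j + 1 := by
  obtain ⟨c, hc⟩ := h
  simp only [colset, Finset.mem_filter] at hc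
  have hcol : colset s τ i j = {c} := by
    apply Finset.eq_singleton_iff_unique_mem.2
    refine ⟨by simp [colset, Finset.mem_filter]; tauto, fun d hd => ?_⟩
    simp only [colset, Finset.mem_filter] at hd
    exact hdist d hd.1 c hc.1 (by omega) (by omega)
  have hunion : s.filter (fun c => τ c = i ∧ c.2 < j + 1) =
      (s.filter fun c => τ c = i ∧ c.2 < j) ∪ colset s τ i j := by
    ext d
    simp only [Finset.mem_union, Finset.mem_filter, colset]
    constructor
    · rintro ⟨hd, h1, h2⟩
      rcases Nat.lt_succ_iff_lt_or_eq.1 h2 with h3 | h3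
      · exact Or.inl ⟨hd, h1, h3⟩
      · exact Or.inr ⟨hd, h1, h3⟩
    · rintro (⟨hd, h1, h2⟩ | ⟨hd, h1, h2⟩) <;> exact ⟨hd, h1, by omega⟩
  rw [cnt, hunion, Finset.card_union_of_disjoint, hcol, Finset.card_singleton, cnt]
  · rw [hcol]
    simp only [Finset.disjoint_singleton_right, Finset.mem_filter]
    rintro ⟨-, -, hlt⟩
    omega

lemma cnt_succ_of_empty {i j : ℕ} (h : ¬ (colset s τ i j).Nonempty) :
    cnt s τ i (j + 1) = cnt s τ i j := by
  rw [Finset.not_nonempty_iff_eq_empty] at h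
  unfold cnt
  congr 1
  ext d
  simp only [Finset.mem_filter]
  constructor
  · rintro ⟨hd, h1, h2⟩
    refine ⟨hd, h1, ?_⟩
    rcases Nat.lt_succ_iff_lt_or_eq.1 h2 with h3 | h3
    · exact h3
    · exfalso
      have : d ∈ colset s τ i j := by simp [colset, Finset.mem_filter]; tauto
      simp [h] at this
  · rintro ⟨hd, h1, h2⟩
    exact ⟨hd, h1, by omega⟩

lemma cnt_anti (hlat : LeftLatticeCond s τ) {i i' : ℕ} (h1 : 1 ≤ i) (h : i ≤ i') (j : ℕ) :
    cnt s τ i' j ≤ cnt s τ i j := by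
  have adj : ∀ m, 1 ≤ m → cnt s τ (m + 1) j ≤ cnt s τ m j := by
    intro m hm
    cases j with
    | zero => rw [cnt_zero, cnt_zero]
    | succ j =>
      have e1 : ∀ (v : ℕ), (s.filter fun c => τ c = v ∧ c.2 < j + 1) =
          s.filter fun c => τ c = v ∧ c.2 ≤ j := by
        intro v; congr 1; ext c; constructor <;> (intro h'; exact ⟨h'.1, by omega⟩)
      unfold cnt
      rw [e1, e1]
      exact hlat m hm j
  induction i' with
  | zero => omega
  | succ i' ih =>
    rcases eq_or_lt_of_le h with rfl | hlt
    · exact le_rfl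
    · exact le_trans (adj i' (by omega)) (ih (by omega))

end RectProof

namespace RectProof

variable {s : Finset (ℕ × ℕ)} {τ : ℕ × ℕ → ℕ} {ν : List ℕ}

lemma count_lt_eq (hpos : ∀ c ∈ s, 0 < τ c) (hcont : HasContent s τ ν) :
    ∀ n, (s.filter fun d => τ d < n + 1).card = (ν.take n).sum := by
  intro n
  induction n with
  | zero =>
    rw [List.take_zero, List.sum_nil, Finset.card_eq_zero]
    ext c
    simp only [Finset.mem_filter, Finset.notMem_empty, iff_false, not_and]
    intro hc
    have := hpos c hc
    omega
  | succ n ih =>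
    have hunion : (s.filter fun d => τ d < n + 2) =
        (s.filter fun d => τ d < n + 1) ∪ (s.filter fun d => τ d = n + 1) := by
      ext d
      simp only [Finset.mem_union, Finset.mem_filter]
      constructor
      · rintro ⟨hd, h1⟩
        rcases Nat.lt_succ_iff_lt_or_eq.1 h1 with h | h
        · exact Or.inl ⟨hd, h⟩
        · exact Or.inr ⟨hd, h⟩
      · rintro (⟨hd, h1⟩ | ⟨hd, h1⟩) <;> exact ⟨hd, by omega⟩
    rw [show n + 1 + 1 = n + 2 from rfl, hunion, Finset.card_union_of_disjoint, ih,
      hcont n, take_sum_succ]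
    simp only [Finset.disjoint_left, Finset.mem_filter]
    rintro d ⟨-, h1⟩ ⟨-, h2⟩
    omega

lemma valbound (hcont : HasContent s τ ν) {c : ℕ × ℕ} (hc : c ∈ s) {i : ℕ}
    (hτ : τ c = i + 1) : i < ν.length := by
  by_contra h
  have h0 : ν.getD i 0 = 0 := List.getD_eq_default _ _ (by omega)
  have := hcont i
  rw [h0, Finset.card_eq_zero] at this
  have : c ∈ s.filter fun c => τ c = i + 1 := by simp [Finset.mem_filter, hc, hτ]
  simp_all

lemma stan_eq_label (hpos : ∀ c ∈ s, 0 < τ c) (hcont : HasContent s τ ν)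
    {c : ℕ × ℕ} (hc : c ∈ s) {i : ℕ} (hτ : τ c = i + 1) :
    stanF s τ c = label s τ ν (i + 1) c.2 := by
  have hsplit : (s.filter fun d => τ d = τ c ∧ c.2 ≤ d.2).card + cnt s τ (i + 1) c.2 =
      ν.getD i 0 := by
    rw [← hcont i, cnt]
    rw [← Finset.card_union_of_disjoint]
    · congr 1
      ext d
      simp only [Finset.mem_union, Finset.mem_filter, hτ]
      constructor
      · rintro (⟨hd, h1, h2⟩ | ⟨hd, h1, h2⟩) <;> exact ⟨hd, h1⟩
      · rintro ⟨hd, h1⟩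
        rcases le_or_gt c.2 d.2 with h | h
        · exact Or.inl ⟨hd, h1, h⟩
        · exact Or.inr ⟨hd, h1, h⟩
    · simp only [Finset.disjoint_left, Finset.mem_filter]
      rintro d ⟨-, -, h1⟩ ⟨-, -, h2⟩
      omega
  have hcle : cnt s τ (i + 1) c.2 ≤ ν.getD i 0 := by omega
  rw [stanF, if_pos hc, hτ, count_lt_eq hpos hcont, label, take_sum_succ]
  simp only [hτ] at hsplit
  omega

lemma mem_colList {x j : ℕ} : x ∈ colList s τ ν j ↔
    ∃ p < ν.length, (colset s τ (p + 1) j).Nonempty ∧ x = label s τ ν (p + 1) j := by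
  simp only [colList, List.mem_filterMap, List.mem_range]
  constructor
  · rintro ⟨p, hp, hx⟩
    by_cases h : (colset s τ (p + 1) j).Nonempty
    · rw [if_pos h, Option.some_inj] at hx
      exact ⟨p, hp, h, hx.symm⟩
    · rw [if_neg h] at hx; cases hx
  · rintro ⟨p, hp, h, rfl⟩
    exact ⟨p, hp, by rw [if_pos h]⟩

lemma label_bounds (hcont : HasContent s τ ν) {p j : ℕ}
    (h : (colset s τ (p + 1) j).Nonempty) :
    (ν.take p).sum < label s τ ν (p + 1) j ∧ label s τ ν (p + 1) j ≤ (ν.take (p + 1)).sum := by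
  have h1 := cnt_lt hcont h
  have h2 := cnt_le hcont p j
  constructor
  · rw [label, take_sum_succ]; omega
  · exact Nat.sub_le _ _

lemma colList_pairwise (hcont : HasContent s τ ν) (j : ℕ) :
    List.Pairwise (· < ·) (colList s τ ν j) := by
  rw [colList, List.pairwise_filterMap]
  apply List.pairwise_lt_range.imp
  intro a b hab x hx y hy
  by_cases ha : (colset s τ (a + 1) j).Nonempty
  · rw [if_pos ha, Option.some_inj] at hx
    by_cases hb : (colset s τ (b + 1) j).Nonempty
    · rw [if_pos hb, Option.some_inj] at hy
      subst hx; subst hy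
      calc label s τ ν (a + 1) j ≤ (ν.take (a + 1)).sum := (label_bounds hcont ha).2
        _ ≤ (ν.take b).sum := take_sum_mono ν (by omega)
        _ < label s τ ν (b + 1) j := (label_bounds hcont hb).1
    · rw [if_neg hb] at hy; cases hy
  · rw [if_neg ha] at hx; cases hx

lemma colEntries_stan_eq (hpos : ∀ c ∈ s, 0 < τ c)
    (hcont : HasContent s τ ν) (j : ℕ) :
    colEntries s (stanF s τ) j = colList s τ ν j := by
  have hmem : ∀ x, x ∈ colEntries s (stanF s τ) j ↔ x ∈ colList s τ ν j := by
    intro x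
    rw [colEntries, Finset.mem_sort, Finset.mem_image, mem_colList]
    constructor
    · rintro ⟨c, hc, rfl⟩
      rw [Finset.mem_filter] at hc
      obtain ⟨i, hτ⟩ : ∃ i, τ c = i + 1 := ⟨τ c - 1, by have := hpos c hc.1; omega⟩
      refine ⟨i, valbound hcont hc.1 hτ, ⟨c, by simp [colset, Finset.mem_filter, hc.1, hτ, hc.2]⟩, ?_⟩
      rw [stan_eq_label hpos hcont hc.1 hτ, hc.2]
    · rintro ⟨p, hp, ⟨c, hc⟩, rfl⟩
      simp only [colset, Finset.mem_filter] at hc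
      refine ⟨c, by simp [Finset.mem_filter, hc.1, hc.2.2], ?_⟩
      rw [stan_eq_label hpos hcont hc.1 hc.2.1, hc.2.2]
  have hpw := colList_pairwise hcont (s := s) (τ := τ) j
  apply List.Perm.eq_of_pairwise'
    (Finset.pairwise_sort _ _) (hpw.imp le_of_lt)
    (List.perm_of_nodup_nodup_toFinset_eq (Finset.sort_nodup _ _)
      (hpw.imp ne_of_lt) ?_)
  ext x
  simp only [List.mem_toFinset]
  exact hmem x

end RectProof

namespace RectProof

variable {s : Finset (ℕ × ℕ)} {τ : ℕ × ℕ → ℕ} {ν : List ℕ}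

lemma col_fold (hdist : ∀ c ∈ s, ∀ d ∈ s, τ c = τ d → c.2 = d.2 → c = d)
    (hcont : HasContent s τ ν) (hlat : LeftLatticeCond s τ) (J : ℕ) :
    List.foldl (fun T k => masonInsert k T)
      (pcB (mkL (fun p => cnt s τ (p + 1) J) ν 0) 0) (colList s τ ν J) =
    pcB (mkL (fun p => cnt s τ (p + 1) (J + 1)) ν 0) 0 := by
  set g : ℕ → ℕ → ℕ := fun t p => if p < t then cnt s τ (p + 1) (J + 1) else cnt s τ (p + 1) J
    with hg
  have aux : ∀ t, t ≤ ν.length →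
      List.foldl (fun T k => masonInsert k T)
        (pcB (mkL (fun p => cnt s τ (p + 1) J) ν 0) 0)
        ((List.range t).filterMap fun p =>
          if (colset s τ (p + 1) J).Nonempty then some (label s τ ν (p + 1) J) else none) =
      pcB (mkL (g t) ν 0) 0 := by
    intro t
    induction t with
    | zero =>
      intro _
      simp only [List.range_zero, List.filterMap_nil, List.foldl_nil]
      exact rfl
    | succ t ih =>
      intro ht
      rw [List.range_succ, List.filterMap_append, List.foldl_append, ih (by omega)]
      simp only [List.filterMap_cons, List.filterMap_nil]
      by_cases hocc : (colset s τ (t + 1) J).Nonempty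
      · rw [if_pos hocc]
        simp only [List.foldl_cons, List.foldl_nil]
        have hlen : t < (mkL (g t) ν 0).length := by rw [mkL_length]; omega
        have hlPt : lP (mkL (g t) ν 0) t = cnt s τ (t + 1) J := by
          rw [lP_mkL _ _ _ _ (by omega)]
          simp [hg]
        have haPt : aP (mkL (g t) ν 0) t = ν.getD t 0 := by
          rw [aP_mkL _ _ _ _ (by omega)]
        have hms := mason_step (mkL (g t) ν 0) 0 t hlen ?h1 ?h2 ?h4
        case h1 =>
          intro p hp
          rw [hlPt, lP_mkL _ _ _ _ (by omega), show (0:ℕ) + p = p by omega,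
            hg]
          simp only [if_pos (show p < t by omega)]
          have e1 : cnt s τ (t + 1) (J + 1) ≤ cnt s τ (p + 1) (J + 1) :=
            cnt_anti hlat (by omega) (by omega) _
          have e2 : cnt s τ (t + 1) (J + 1) = cnt s τ (t + 1) J + 1 :=
            cnt_succ_of_occ hdist hocc
          omega
        case h2 =>
          intro q hq hq'
          rw [hlPt, lP_mkL _ _ _ _ (by rw [mkL_length] at hq'; omega),
            show (0:ℕ) + q = q by omega, hg]
          simp only [if_neg (show ¬ q < t by omega)]
          exact cnt_anti hlat (by omega) (by omega) _
        case h4 =>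
          rw [hlPt, haPt]
          exact cnt_lt hcont hocc
        have hkeq : label s τ ν (t + 1) J =
            0 + SA (mkL (g t) ν 0) t + (aP (mkL (g t) ν 0) t - lP (mkL (g t) ν 0) t) := by
          rw [hlPt, haPt, SA_mkL, label, take_sum_succ]
          have := cnt_le hcont t J
          omega
        rw [hkeq, hms, hlPt, haPt, mkL_set (by omega)]
        congr 1
        apply mkL_congr
        intro p hp
        simp only [Nat.zero_add, hg]
        rcases eq_or_ne p t with rfl | hne
        · rw [if_pos rfl, if_pos (by omega)]
          exact (cnt_succ_of_occ hdist hocc).symm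
        · rw [if_neg (by omega)]
          rcases lt_or_ge p t with h | h
          · rw [if_pos h, if_pos (by omega)]
          · rw [if_neg (by omega), if_neg (by omega)]
      · rw [if_neg hocc]
        simp only [List.foldl_nil]
        congr 1
        apply mkL_congr
        intro p hp
        simp only [Nat.zero_add, hg]
        rcases eq_or_ne p t with rfl | hne
        · rw [if_neg (by omega), if_pos (by omega)]
          exact (cnt_succ_of_empty hocc).symm
        · rcases lt_or_ge p t with h | h
          · rw [if_pos h, if_pos (by omega)]
          · rw [if_neg (by omega), if_neg (by omega)]
  have := aux ν.length le_rfl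
  rw [colList, this]
  congr 1
  apply mkL_congr
  intro p hp
  simp only [Nat.zero_add, hg]
  rw [if_pos (by omega)]

theorem core (hpos : ∀ c ∈ s, 0 < τ c)
    (hdist : ∀ c ∈ s, ∀ d ∈ s, τ c = τ d → c.2 = d.2 → c = d)
    (hcont : HasContent s τ ν) (hlat : LeftLatticeCond s τ)
    (hν : ∀ a ∈ ν, 0 < a) :
    rectRows s (stanF s τ) = canonRows ν := by
  have inv : ∀ J, rectPartial s (stanF s τ) J =
      pcB (mkL (fun p => cnt s τ (p + 1) J) ν 0) 0 := by
    intro J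
    induction J with
    | zero =>
      rw [rectPartial, rectWord]
      simp only [List.range_zero, List.flatMap_nil, List.foldl_nil]
      exact (pcB_mkL_zero (fun p hp => cnt_zero _)).symm
    | succ J ih =>
      rw [rectPartial, rectWord, List.range_succ, List.flatMap_append,
        List.foldl_append]
      rw [rectPartial, rectWord] at ih
      rw [ih]
      simp only [List.flatMap_cons, List.flatMap_nil, List.append_nil]
      rw [colEntries_stan_eq hpos hcont]
      exact col_fold hdist hcont hlat J
  rw [rectRows, inv]
  rw [pcB_mkL_full ?_ hν]
  · rfl
  · intro p hp
    simp only [Nat.zero_add]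
    rw [← hcont p, cnt]
    congr 1
    ext c
    simp only [Finset.mem_filter, and_congr_right_iff]
    intro hc
    constructor
    · tauto
    · intro h1
      refine ⟨h1, ?_⟩
      have h2 : c.2 + 1 ≤ s.sup fun c => c.2 + 1 :=
        Finset.le_sup (f := fun c => c.2 + 1) hc
      omega

end RectProof

namespace RectProof

lemma dist_of_SSRCT {α β : List ℕ} {τ : ℕ × ℕ → ℕ} (h : IsSSRCT α β τ) :
    ∀ c ∈ skewDiag α β, ∀ d ∈ skewDiag α β, τ c = τ d → c.2 = d.2 → c = d := by
  suffices H : ∀ i1 i2 y, i1 < i2 → (i1, y) ∈ skewDiag α β → (i2, y) ∈ skewDiag α β →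
      τ (i1, y) = τ (i2, y) → False by
    rintro ⟨i1, y⟩ hc ⟨i2, y2⟩ hd hval hcol
    dsimp only at hcol
    subst hcol
    rcases lt_trichotomy i1 i2 with h' | h' | h'
    · exact absurd hval (fun hv => H i1 i2 y h' hc hd hv)
    · rw [h']
    · exact absurd hval.symm (fun hv => H i2 i1 y h' hd hc hv)
  intro i1 i2 y h12 hc hd hval
  cases y with
  | zero =>
    have := h.col_strict i1 i2 h12 hc hd
    omega
  | succ k =>
    have h1 : (i1, k + 1) ∈ cdiag α := (Finset.mem_sdiff.1 hc).1
    have hcd : (i1, k) ∈ cdiag α := by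
      simp only [cdiag, Finset.mem_filter, Finset.mem_product, Finset.mem_range] at h1 ⊢
      omega
    have htrip := h.triple i1 i2 k h12 hd ?_
    · rcases htrip with hin | ⟨hsk, hlt⟩
      · exact (Finset.mem_sdiff.1 hc).2 hin
      · omega
    · by_cases hin : (i1, k) ∈ innerDiag α β
      · exact Or.inl hin
      · have hsk : (i1, k) ∈ skewDiag α β := Finset.mem_sdiff.2 ⟨hcd, hin⟩
        refine Or.inr ⟨hsk, ?_⟩
        have := h.row_weak i1 k hsk hc
        omega

end RectProof

end RectStanProof

/-- every `τ ∈ LRRCT^l_ν(α//β)` satisfies `rect(stan(τ)) = τ_ν`. -/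
theorem rect_stan_of_LRRCTl (α β ν : List ℕ)
    (hα : IsComposition α) (hβ : IsComposition β) (hlt : LtC β α)
    (hν : IsPartitionL ν) (hsize : ν.sum = (skewDiag α β).card)
    (τ : ℕ × ℕ → ℕ) (hτ : τ ∈ LRRCTlnu α β ν) :
    rectRows (skewDiag α β) (stanF (skewDiag α β) τ) = canonRows ν := by
  obtain ⟨⟨hssrct, hlat⟩, hcont⟩ := hτ
  exact RectProof.core hssrct.pos_on (RectProof.dist_of_SSRCT hssrct) hcont hlat hν.1
end

section
/- Let β <_c α be compositions with ℓ(β) = k and ℓ(α) = k+ℓ. If the upper shape of α//β is not a partition, i.e., α_j > α_{j−1} for some 2 ≤ j ≤ ℓ, then LRRCT^l_ν(α//β) is empty for every partition ν; consequently every element of LRRCT^l(α//β) has content that is not a partition. -/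
open Finset

lemma mem_cdiag_iff {γ : List ℕ} {i x : ℕ} :
    (i, x) ∈ cdiag γ ↔ i < γ.length ∧ x < γ.getD i 0 := by
  simp only [cdiag, mem_filter, mem_product, mem_range]
  constructor
  · rintro ⟨⟨h1, _⟩, h3⟩; exact ⟨h1, h3⟩
  · rintro ⟨h1, h3⟩
    refine ⟨⟨h1, lt_of_lt_of_le h3 ?_⟩, h3⟩
    have hmem : γ.getD i 0 ∈ γ := by
      rw [List.getD_eq_getElem γ 0 h1]; exact List.getElem_mem h1
    exact List.single_le_sum (fun _ _ => Nat.zero_le _) _ hmem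

lemma mem_inner_iff {α β : List ℕ} {i x : ℕ} :
    (i, x) ∈ innerDiag α β ↔
      α.length - β.length ≤ i ∧ (i - (α.length - β.length), x) ∈ cdiag β := by
  simp only [innerDiag, mem_image, Prod.mk.injEq]
  constructor
  · rintro ⟨⟨a, b⟩, hm, h1, h2⟩
    subst h2
    constructor
    · omega
    · have : i - (α.length - β.length) = a := by omega
      rw [this]; exact hm
  · rintro ⟨h1, h2⟩
    exact ⟨(i - (α.length - β.length), x), h2, by omega, rfl⟩

lemma key_empty (α β : List ℕ) (hα : IsComposition α) (hβ : IsComposition β)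
    (m : ℕ) (hjl : m + 2 ≤ α.length - β.length)
    (hgt : α.getD m 0 < α.getD (m + 1) 0) :
    ∀ τ, τ ∉ LRRCTl α β := by
  intro τ hτ
  obtain ⟨hss, hlat⟩ := hτ
  have hαpos : ∀ i, i < α.length → 0 < α.getD i 0 := by
    intro i hi
    rw [List.getD_eq_getElem α 0 hi]
    exact hα _ (List.getElem_mem hi)
  have hβpos : ∀ i, i < β.length → 0 < β.getD i 0 := by
    intro i hi
    rw [List.getD_eq_getElem β 0 hi]
    exact hβ _ (List.getElem_mem hi)
  have hnotinner : ∀ i x, i < α.length - β.length → (i, x) ∉ innerDiag α β := by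
    intro i x hi hmem
    have := (mem_inner_iff.mp hmem).1
    omega
  have hskewU : ∀ i x, i < α.length - β.length →
      ((i, x) ∈ skewDiag α β ↔ x < α.getD i 0) := by
    intro i x hi
    rw [skewDiag, mem_sdiff]
    constructor
    · rintro ⟨hc, -⟩; exact (mem_cdiag_iff.mp hc).2
    · intro hx; exact ⟨mem_cdiag_iff.mpr ⟨by omega, hx⟩, hnotinner i x hi⟩
  have hcol0skew : ∀ i, ((i, 0) ∈ skewDiag α β ↔ i < α.length - β.length) := by
    intro i
    constructor
    · intro hmem
      by_contra hge
      push_neg at hge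
      have hc := (mem_sdiff.mp hmem).1
      have hiα : i < α.length := (mem_cdiag_iff.mp hc).1
      have : (i, 0) ∈ innerDiag α β := by
        refine mem_inner_iff.mpr ⟨hge, mem_cdiag_iff.mpr ⟨by omega, ?_⟩⟩
        exact hβpos _ (by omega)
      exact (mem_sdiff.mp hmem).2 this
    · intro hi; exact (hskewU i 0 hi).mpr (hαpos i (by omega))
  have hrowdec : ∀ i x y, i < α.length - β.length → x ≤ y → y < α.getD i 0 →
      τ (i, y) ≤ τ (i, x) := by
    intro i x y hi
    induction y with
    | zero =>
      intro hxy _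
      have : x = 0 := by omega
      subst this; exact le_refl _
    | succ y IH =>
      intro hxy hy
      rcases Nat.eq_or_lt_of_le hxy with rfl | hlt
      · exact le_refl _
      · have h1 : τ (i, y + 1) ≤ τ (i, y) :=
          hss.row_weak i y ((hskewU i y hi).mpr (by omega)) ((hskewU i (y + 1) hi).mpr hy)
        exact le_trans h1 (IH (by omega) (by omega))
  have hlow : ∀ i, i < α.length - β.length → i + 1 ≤ τ (i, 0) := by
    intro i
    induction i with
    | zero => intro h; exact hss.pos_on _ ((hcol0skew 0).mpr h)
    | succ i IH =>
      intro h
      have h1 := hss.col_strict i (i + 1) (by omega) ((hcol0skew i).mpr (by omega))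
        ((hcol0skew (i + 1)).mpr h)
      have h2 := IH (by omega)
      omega
  have hlat_ex : ∀ w x i y, 1 ≤ w → (i, y) ∈ skewDiag α β → τ (i, y) = w + 1 → y ≤ x →
      ∃ c, c ∈ skewDiag α β ∧ τ c = w ∧ c.2 ≤ x := by
    intro w x i y hw hmem hval hyx
    have hA : 0 < ((skewDiag α β).filter fun c => τ c = w + 1 ∧ c.2 ≤ x).card :=
      card_pos.mpr ⟨(i, y), mem_filter.mpr ⟨hmem, hval, hyx⟩⟩
    have hB := hlat w hw x
    obtain ⟨c, hc⟩ := card_pos.mp (lt_of_lt_of_le hA hB)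
    obtain ⟨h1, h2, h3⟩ := mem_filter.mp hc
    exact ⟨c, h1, h2, h3⟩
  have hup : ∀ v i, i < α.length - β.length → τ (i, 0) = v → v ≤ i + 1 := by
    intro v
    induction v using Nat.strong_induction_on with
    | _ v IHv =>
      intro i hi hv
      by_contra hgt2
      push_neg at hgt2
      have hv2 : 2 ≤ v := by omega
      obtain ⟨c, hcmem, hcv, hcx⟩ := hlat_ex (v - 1) 0 i 0 (by omega)
        ((hcol0skew i).mpr hi) (by omega) le_rfl
      obtain ⟨i', y'⟩ := c
      have hy0 : y' = 0 := by simpa using hcx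
      subst hy0
      have hi' : i' < α.length - β.length := (hcol0skew i').mp hcmem
      have hle := IHv (v - 1) (by omega) i' hi' hcv
      have hii : i' < i := by
        rcases lt_trichotomy i' i with h | h | h
        · exact h
        · exfalso; subst h; omega
        · exfalso
          have := hss.col_strict i i' h ((hcol0skew i).mpr hi) hcmem
          omega
      omega
  have hcol0val : ∀ i, i < α.length - β.length → τ (i, 0) = i + 1 :=
    fun i hi => le_antisymm (hup _ i hi rfl) (hlow i hi)
  have hdistinct : ∀ i i' x, (i, x) ∈ skewDiag α β → (i', x) ∈ skewDiag α β →
      τ (i, x) = τ (i', x) → i = i' := by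
    have h : ∀ i i' x, i < i' → (i, x) ∈ skewDiag α β → (i', x) ∈ skewDiag α β →
        τ (i, x) = τ (i', x) → False := by
      intro i i' x hlt h1 h2 h3
      cases x with
      | zero =>
        have := hss.col_strict i i' hlt h1 h2; omega
      | succ k =>
        have hcd : (i, k) ∈ cdiag α := by
          have hc := (mem_sdiff.mp h1).1
          obtain ⟨ha, hb⟩ := mem_cdiag_iff.mp hc
          exact mem_cdiag_iff.mpr ⟨ha, by omega⟩
        have hhyp : (i, k) ∈ innerDiag α β ∨
            ((i, k) ∈ skewDiag α β ∧ τ (i', k + 1) ≤ τ (i, k)) := by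
          by_cases hin : (i, k) ∈ innerDiag α β
          · exact Or.inl hin
          · have hsk : (i, k) ∈ skewDiag α β := mem_sdiff.mpr ⟨hcd, hin⟩
            refine Or.inr ⟨hsk, ?_⟩
            rw [← h3]; exact hss.row_weak i k hsk h1
        rcases hss.triple i i' k hlt h2 hhyp with hin | ⟨-, hlt2⟩
        · exact (mem_sdiff.mp h1).2 hin
        · omega
    intro i i' x h1 h2 h3
    rcases lt_trichotomy i i' with hlt | heq | hlt
    · exact absurd h3 fun hh => h i i' x hlt h1 h2 hh
    · exact heq
    · exact (h i' i x hlt h2 h1 h3.symm).elim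
  have hpigeon : ∀ w x, (∀ y, y ≤ x → ∃ i, (i, y) ∈ skewDiag α β ∧ τ (i, y) = w + 1) →
      1 ≤ w → ∃ i, (i, x) ∈ skewDiag α β ∧ τ (i, x) = w := by
    intro w x hall hw
    by_contra hnone
    push_neg at hnone
    have hAcard : x + 1 ≤ ((skewDiag α β).filter fun c => τ c = w + 1 ∧ c.2 ≤ x).card := by
      have hsurj : Set.SurjOn (fun c : ℕ × ℕ => c.2)
          ↑((skewDiag α β).filter fun c => τ c = w + 1 ∧ c.2 ≤ x) ↑(range (x + 1)) := by
        intro y hy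
        simp only [coe_range, Set.mem_Iio] at hy
        obtain ⟨i, hm2, hv2⟩ := hall y (by omega)
        refine ⟨(i, y), ?_, rfl⟩
        simp only [mem_coe, mem_filter]
        exact ⟨hm2, hv2, by omega⟩
      have := Finset.card_le_card_of_surjOn _ hsurj
      simpa using this
    have hAB := hlat w hw x
    have hBcard : ((skewDiag α β).filter fun c => τ c = w ∧ c.2 ≤ x).card ≤ x := by
      have hinj : Set.InjOn (fun c : ℕ × ℕ => c.2)
          ↑((skewDiag α β).filter fun c => τ c = w ∧ c.2 ≤ x) := by
        rintro ⟨a, b⟩ hc ⟨a', b'⟩ hc' hcc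
        simp only [mem_coe, mem_filter] at hc hc'
        dsimp at hcc
        subst hcc
        have : a = a' := hdistinct a a' b hc.1 hc'.1 (by rw [hc.2.1, hc'.2.1])
        rw [this]
      have himg : ((skewDiag α β).filter fun c => τ c = w ∧ c.2 ≤ x).image
          (fun c : ℕ × ℕ => c.2) ⊆ range x := by
        intro y hy
        obtain ⟨⟨a, b⟩, hc, rfl⟩ := mem_image.mp hy
        obtain ⟨hcs, hcv, hcx⟩ := mem_filter.mp hc
        have hbx : b ≠ x := by
          intro hx2
          subst hx2
          exact hnone a hcs hcv
        exact mem_range.mpr (by omega)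
      calc ((skewDiag α β).filter fun c => τ c = w ∧ c.2 ≤ x).card
          = (((skewDiag α β).filter fun c => τ c = w ∧ c.2 ≤ x).image
              (fun c : ℕ × ℕ => c.2)).card := (Finset.card_image_of_injOn hinj).symm
        _ ≤ (range x).card := card_le_card himg
        _ = x := card_range x
    omega
  -- specialized memberships
  have hmsk : ∀ y, y < α.getD m 0 → (m, y) ∈ skewDiag α β :=
    fun y hy => (hskewU m y (by omega)).mpr hy
  have hm1sk : ∀ y, y ≤ α.getD m 0 → (m + 1, y) ∈ skewDiag α β :=
    fun y hy => (hskewU (m + 1) y (by omega)).mpr (by omega)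
  -- fact (2)
  have hPaux : ∀ d k, k < α.getD m 0 → α.getD m 0 - 1 - k = d →
      τ (m + 1, k + 1) ≤ τ (m, k) → False := by
    intro d
    induction d with
    | zero =>
      intro k hk hd hle
      rcases hss.triple m (m + 1) k (by omega) (hm1sk (k + 1) (by omega))
        (Or.inr ⟨hmsk k hk, hle⟩) with hin | ⟨hsk2, -⟩
      · exact hnotinner m (k + 1) (by omega) hin
      · have := (hskewU m (k + 1) (by omega)).mp hsk2; omega
    | succ d IH =>
      intro k hk hd hle
      have hk1 : k + 1 < α.getD m 0 := by omega
      rcases hss.triple m (m + 1) k (by omega) (hm1sk (k + 1) (by omega))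
        (Or.inr ⟨hmsk k hk, hle⟩) with hin | ⟨-, hlt2⟩
      · exact hnotinner m (k + 1) (by omega) hin
      · have hrow : τ (m + 1, k + 1 + 1) ≤ τ (m + 1, k + 1) :=
          hss.row_weak (m + 1) (k + 1) (hm1sk _ (by omega)) (hm1sk _ (by omega))
        exact IH (k + 1) hk1 (by omega) (by omega)
  have hP : ∀ k, k < α.getD m 0 → τ (m, k) < τ (m + 1, k + 1) := by
    intro k hk
    by_contra hle
    push_neg at hle
    exact hPaux _ k hk rfl hle
  -- main induction
  have hQ : ∀ x, x < α.getD m 0 → τ (m, x) = m + 1 ∧ τ (m + 1, x) = m + 2 := by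
    intro x
    induction x using Nat.strong_induction_on with
    | _ x IH =>
      intro hx
      rcases Nat.eq_zero_or_pos x with rfl | hxpos
      · exact ⟨hcol0val m (by omega), hcol0val (m + 1) (by omega)⟩
      obtain ⟨x', rfl⟩ : ∃ x', x = x' + 1 := ⟨x - 1, by omega⟩
      have hQ' : ∀ y, y ≤ x' → τ (m, y) = m + 1 ∧ τ (m + 1, y) = m + 2 :=
        fun y hy => IH y (by omega) (by omega)
      have hr2 : τ (m + 1, x' + 1) = m + 2 := by
        have h1 := hP x' (by omega)
        have h2 : τ (m + 1, x' + 1) ≤ τ (m + 1, x') :=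
          hss.row_weak (m + 1) x' (hm1sk _ (by omega)) (hm1sk _ (by omega))
        have h3 := (hQ' x' le_rfl).1
        have h4 := (hQ' x' le_rfl).2
        omega
      refine ⟨?_, hr2⟩
      have hall : ∀ y, y ≤ x' + 1 → ∃ i, (i, y) ∈ skewDiag α β ∧ τ (i, y) = (m + 1) + 1 := by
        intro y hy
        refine ⟨m + 1, hm1sk y (by omega), ?_⟩
        rcases Nat.lt_or_ge y (x' + 1) with h | h
        · exact (hQ' y (by omega)).2
        · have he : y = x' + 1 := by omega
          rw [he]; exact hr2
      obtain ⟨i, hmem2, hval2⟩ := hpigeon (m + 1) (x' + 1) hall (by omega)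
      by_cases him : i = m
      · rwa [him] at hval2
      exfalso
      have hne1 : i ≠ m + 1 := by
        intro h; subst h; omega
      have higt : m < i := by
        rcases Nat.lt_or_ge i (α.length - β.length) with hi | hi
        · have hb1 : τ (i, x' + 1) ≤ τ (i, 0) :=
            hrowdec i 0 (x' + 1) hi (by omega) ((hskewU i (x' + 1) hi).mp hmem2)
          have hb2 : τ (i, 0) = i + 1 := hcol0val i hi
          omega
        · omega
      have hhyp2 : τ (i, x' + 1) ≤ τ (m, x') := by
        have := (hQ' x' le_rfl).1; omega
      rcases hss.triple m i x' higt hmem2 (Or.inr ⟨hmsk x' (by omega), hhyp2⟩) with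
        hin | ⟨-, hlt2⟩
      · exact hnotinner m (x' + 1) (by omega) hin
      · have hb1 : τ (m, x' + 1) ≤ τ (m, 0) := hrowdec m 0 (x' + 1) (by omega) (by omega) hx
        have hb2 := hcol0val m (by omega)
        omega
  -- final contradiction
  obtain ⟨x₀, hx0⟩ : ∃ x₀, α.getD m 0 = x₀ + 1 :=
    ⟨α.getD m 0 - 1, by have := hαpos m (by omega); omega⟩
  have hlast : τ (m + 1, x₀ + 1) = m + 2 := by
    have h1 := hP x₀ (by omega)
    have h2 : τ (m + 1, x₀ + 1) ≤ τ (m + 1, x₀) :=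
      hss.row_weak (m + 1) x₀ (hm1sk _ (by omega)) (hm1sk _ (by omega))
    have h3 := (hQ x₀ (by omega)).1
    have h4 := (hQ x₀ (by omega)).2
    omega
  have hall2 : ∀ y, y ≤ x₀ + 1 → ∃ i, (i, y) ∈ skewDiag α β ∧ τ (i, y) = (m + 1) + 1 := by
    intro y hy
    refine ⟨m + 1, hm1sk y (by omega), ?_⟩
    rcases Nat.lt_or_ge y (x₀ + 1) with h | h
    · exact (hQ y (by omega)).2
    · have he : y = x₀ + 1 := by omega
      rw [he]; exact hlast
  obtain ⟨i, hmem2, hval2⟩ := hpigeon (m + 1) (x₀ + 1) hall2 (by omega)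
  have hne0 : i ≠ m := by
    intro h
    rw [h] at hmem2
    have := (hskewU m (x₀ + 1) (by omega)).mp hmem2
    omega
  have hne1 : i ≠ m + 1 := by
    intro h; subst h; omega
  have higt : m < i := by
    rcases Nat.lt_or_ge i (α.length - β.length) with hi | hi
    · have hb1 : τ (i, x₀ + 1) ≤ τ (i, 0) :=
        hrowdec i 0 (x₀ + 1) hi (by omega) ((hskewU i (x₀ + 1) hi).mp hmem2)
      have hb2 : τ (i, 0) = i + 1 := hcol0val i hi
      omega
    · omega
  have hhyp2 : τ (i, x₀ + 1) ≤ τ (m, x₀) := by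
    have := (hQ x₀ (by omega)).1; omega
  rcases hss.triple m i x₀ higt hmem2 (Or.inr ⟨hmsk x₀ (by omega), hhyp2⟩) with
    hin | ⟨hsk2, -⟩
  · exact hnotinner m (x₀ + 1) (by omega) hin
  · have := (hskewU m (x₀ + 1) (by omega)).mp hsk2
    omega

/-- if the upper shape of `α//β` is not a partition, i.e.
`α_j > α_{j-1}` for some `2 ≤ j ≤ ℓ` (parts 1-indexed, `ℓ = ℓ(α) - ℓ(β)`), then
`LRRCT^l_ν(α//β)` is empty for every partition `ν`; consequently every element
of `LRRCT^l(α//β)` has content that is not a partition. -/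
theorem LRRCTl_empty_of_not_partition (α β : List ℕ)
    (hα : IsComposition α) (hβ : IsComposition β) (hlt : LtC β α)
    (j : ℕ) (h2 : 2 ≤ j) (hjl : j ≤ α.length - β.length)
    (hgt : α.getD (j - 2) 0 < α.getD (j - 1) 0) :
    (∀ ν, IsPartitionL ν → LRRCTlnu α β ν = ∅) ∧
    ∀ τ ∈ LRRCTl α β, ∀ ν, IsPartitionL ν → ¬ HasContent (skewDiag α β) τ ν := by
  obtain ⟨m, rfl⟩ : ∃ m, j = m + 2 := ⟨j - 2, by omega⟩
  have hjl' : m + 2 ≤ α.length - β.length := hjl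
  have hgt' : α.getD m 0 < α.getD (m + 1) 0 := by
    have e1 : m + 2 - 2 = m := by omega
    have e2 : m + 2 - 1 = m + 1 := by omega
    rwa [e1, e2] at hgt
  have key := key_empty α β hα hβ m hjl' hgt'
  constructor
  · intro ν hν
    exact Set.eq_empty_iff_forall_notMem.mpr fun τ hτ => key τ hτ.1
  · intro τ hτ ν hν hcon
    exact key τ hτ
end
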